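/- For p ∈ (1,∞), the curvature of the α-geometry on the positive quadrant curve {(x,y): (x/p)^p + (y/p)^p = 1, x,y > 0}, parametrized by x = p(cos θ)^{2/p}, y = p(sin θ)^{2/p} for θ ∈ (0, π/2), is c_p(θ) = ((p-1)/p) · (1/2)^{2(1-2/p)} · (sin 2θ)^{2(1-2/p)} / [ (cos θ)^{4/p̃} + (sin θ)^{4/p̃} ]^{3/2}, where 1/p + 1/p̃ = 1. -/

import Mathlib

open Real Filter Topology

/-- Curvature of the α-geometry on `P¹₂`, parametrized by `ρ = (cos²θ, sin²θ)`. -/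
noncomputable def cCurv (p pt θ : ℝ) : ℝ :=
  ((p - 1) / p) * (1 / 2 : ℝ) ^ (2 * (1 - 2 / p)) *
    (Real.sin (2 * θ)) ^ (2 * (1 - 2 / p)) /
      ((Real.cos θ) ^ (4 / pt) + (Real.sin θ) ^ (4 / pt)) ^ ((3 : ℝ) / 2)

lemma hxDeriv (p : ℝ) (hp : 0 < p) (t : ℝ) (ht : t ∈ Set.Ioo 0 (π / 2)) :
    HasDerivAt (fun t => p * Real.cos t ^ (2 / p))
      (-2 * Real.sin t * Real.cos t ^ (2 / p - 1)) t := by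
  have hc : 0 < Real.cos t := Real.cos_pos_of_mem_Ioo ⟨by linarith [ht.1, pi_pos], ht.2⟩
  have h := ((Real.hasDerivAt_cos t).rpow_const (p := 2 / p) (Or.inl hc.ne')).const_mul p
  refine h.congr_deriv ?_
  rw [show p * (-Real.sin t * (2 / p) * Real.cos t ^ (2 / p - 1)) =
      (p * (2 / p)) * (-Real.sin t * Real.cos t ^ (2 / p - 1)) from by ring,
    mul_div_cancel₀ _ hp.ne']
  ring

lemma hyDeriv (p : ℝ) (hp : 0 < p) (t : ℝ) (ht : t ∈ Set.Ioo 0 (π / 2)) :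
    HasDerivAt (fun t => p * Real.sin t ^ (2 / p))
      (2 * Real.cos t * Real.sin t ^ (2 / p - 1)) t := by
  have hs : 0 < Real.sin t := Real.sin_pos_of_pos_of_lt_pi ht.1 (by linarith [ht.2, pi_pos])
  have h := ((Real.hasDerivAt_sin t).rpow_const (p := 2 / p) (Or.inl hs.ne')).const_mul p
  refine h.congr_deriv ?_
  rw [show p * (Real.cos t * (2 / p) * Real.sin t ^ (2 / p - 1)) =
      (p * (2 / p)) * (Real.cos t * Real.sin t ^ (2 / p - 1)) from by ring,
    mul_div_cancel₀ _ hp.ne']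
  ring

lemma hxDeriv2 (p : ℝ) (t : ℝ) (ht : t ∈ Set.Ioo 0 (π / 2)) :
    HasDerivAt (fun t => -2 * Real.sin t * Real.cos t ^ (2 / p - 1))
      (-2 * (Real.cos t * Real.cos t ^ (2 / p - 1) +
        Real.sin t * -Real.sin t * (2 / p - 1) * Real.cos t ^ (2 / p - 1 - 1))) t := by
  have hc : 0 < Real.cos t := Real.cos_pos_of_mem_Ioo ⟨by linarith [ht.1, pi_pos], ht.2⟩
  have h := ((Real.hasDerivAt_sin t).mul
    ((Real.hasDerivAt_cos t).rpow_const (p := 2 / p - 1) (Or.inl hc.ne'))).const_mul (-2 : ℝ)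
  simp only [← mul_assoc] at h
  simpa only [Pi.mul_apply, mul_assoc] using h

lemma hyDeriv2 (p : ℝ) (t : ℝ) (ht : t ∈ Set.Ioo 0 (π / 2)) :
    HasDerivAt (fun t => 2 * Real.cos t * Real.sin t ^ (2 / p - 1))
      (2 * (-Real.sin t * Real.sin t ^ (2 / p - 1) +
        Real.cos t * Real.cos t * (2 / p - 1) * Real.sin t ^ (2 / p - 1 - 1))) t := by
  have hs : 0 < Real.sin t := Real.sin_pos_of_pos_of_lt_pi ht.1 (by linarith [ht.2, pi_pos])
  have h := ((Real.hasDerivAt_cos t).mul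
    ((Real.hasDerivAt_sin t).rpow_const (p := 2 / p - 1) (Or.inl hs.ne'))).const_mul (2 : ℝ)
  simp only [← mul_assoc] at h
  simpa only [Pi.mul_apply, mul_assoc] using h

/-- Curvature of the curve `(x/p)^p + (y/p)^p = 1` parametrized by
`x = p (cos θ)^{2/p}`, `y = p (sin θ)^{2/p}`. -/
theorem curvature_alpha_geometry (p pt : ℝ) (hp : 1 < p) (hpt : 1 / p + 1 / pt = 1)
    (θ : ℝ) (hθ : θ ∈ Set.Ioo 0 (π / 2)) :
    |deriv (fun t => p * Real.cos t ^ (2 / p)) θ *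
        deriv (deriv (fun t => p * Real.sin t ^ (2 / p))) θ -
      deriv (deriv (fun t => p * Real.cos t ^ (2 / p))) θ *
        deriv (fun t => p * Real.sin t ^ (2 / p)) θ| /
      ((deriv (fun t => p * Real.cos t ^ (2 / p)) θ) ^ 2 +
        (deriv (fun t => p * Real.sin t ^ (2 / p)) θ) ^ 2) ^ ((3 : ℝ) / 2) =
    cCurv p pt θ := by
  obtain ⟨hθ1, hθ2⟩ := hθ
  have hθ' : θ ∈ Set.Ioo 0 (π / 2) := ⟨hθ1, hθ2⟩
  have hp0 : 0 < p := by linarith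
  have hc : 0 < Real.cos θ := Real.cos_pos_of_mem_Ioo ⟨by linarith [pi_pos], hθ2⟩
  have hs : 0 < Real.sin θ := Real.sin_pos_of_pos_of_lt_pi hθ1 (by linarith [pi_pos])
  have hmem : Set.Ioo 0 (π / 2) ∈ 𝓝 θ := Ioo_mem_nhds hθ1 hθ2
  have hdx : deriv (fun t => p * Real.cos t ^ (2 / p)) θ =
      -2 * Real.sin θ * Real.cos θ ^ (2 / p - 1) := (hxDeriv p hp0 θ hθ').deriv
  have hdy : deriv (fun t => p * Real.sin t ^ (2 / p)) θ =
      2 * Real.cos θ * Real.sin θ ^ (2 / p - 1) := (hyDeriv p hp0 θ hθ').deriv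
  have hdx2 : deriv (deriv (fun t => p * Real.cos t ^ (2 / p))) θ =
      -2 * (Real.cos θ * Real.cos θ ^ (2 / p - 1) +
        Real.sin θ * -Real.sin θ * (2 / p - 1) * Real.cos θ ^ (2 / p - 1 - 1)) := by
    have hev : deriv (fun t => p * Real.cos t ^ (2 / p)) =ᶠ[𝓝 θ]
        (fun t => -2 * Real.sin t * Real.cos t ^ (2 / p - 1)) := by
      filter_upwards [hmem] with t ht
      exact (hxDeriv p hp0 t ht).deriv
    rw [hev.deriv_eq]
    exact (hxDeriv2 p θ hθ').deriv
  have hdy2 : deriv (deriv (fun t => p * Real.sin t ^ (2 / p))) θ =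
      2 * (-Real.sin θ * Real.sin θ ^ (2 / p - 1) +
        Real.cos θ * Real.cos θ * (2 / p - 1) * Real.sin θ ^ (2 / p - 1 - 1)) := by
    have hev : deriv (fun t => p * Real.sin t ^ (2 / p)) =ᶠ[𝓝 θ]
        (fun t => 2 * Real.cos t * Real.sin t ^ (2 / p - 1)) := by
      filter_upwards [hmem] with t ht
      exact (hyDeriv p hp0 t ht).deriv
    rw [hev.deriv_eq]
    exact (hyDeriv2 p θ hθ').deriv
  rw [hdx, hdy, hdx2, hdy2]
  simp only [cCurv]
  have hcc : Real.cos θ ^ (2 / p - 1 - 1) = Real.cos θ ^ (2 / p - 1) / Real.cos θ := by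
    rw [Real.rpow_sub hc (2 / p - 1) 1, Real.rpow_one]
  have hss : Real.sin θ ^ (2 / p - 1 - 1) = Real.sin θ ^ (2 / p - 1) / Real.sin θ := by
    rw [Real.rpow_sub hs (2 / p - 1) 1, Real.rpow_one]
  rw [hcc, hss]
  set c := Real.cos θ with hcdef
  set s := Real.sin θ with hsdef
  set u := c ^ (2 / p - 1) with hudef
  set v := s ^ (2 / p - 1) with hvdef
  have hu0 : 0 < u := Real.rpow_pos_of_pos hc _
  have hv0 : 0 < v := Real.rpow_pos_of_pos hs _
  have hsc1 : s ^ 2 + c ^ 2 = 1 := Real.sin_sq_add_cos_sq θ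
  -- numerator
  have hnum : -2 * s * u * (2 * (-s * v + c * c * (2 / p - 1) * (v / s))) -
      -2 * (c * u + s * -s * (2 / p - 1) * (u / c)) * (2 * c * v) =
      4 * (2 - 2 / p) * (u * v) := by
    field_simp
    linear_combination (4 * p - 4) * hsc1
  rw [hnum]
  have h22p : (0 : ℝ) < 2 - 2 / p := by
    have : 2 / p < 2 := by rw [div_lt_iff₀ hp0]; nlinarith
    linarith
  have hpos : (0 : ℝ) < 4 * (2 - 2 / p) * (u * v) :=
    mul_pos (by linarith) (mul_pos hu0 hv0)
  rw [abs_of_pos hpos]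
  -- exponent for pt
  have h4pt : 4 / pt = 4 - 4 / p := by
    have h1 : 1 / pt = 1 - 1 / p := by linarith
    calc 4 / pt = 4 * (1 / pt) := by ring
      _ = 4 - 4 / p := by rw [h1]; ring
  have hXc : c ^ (4 / pt) = c ^ 2 / u ^ 2 := by
    rw [h4pt, show (4 - 4 / p : ℝ) = 2 - (2 / p - 1) * 2 from by ring,
      Real.rpow_sub hc, Real.rpow_mul hc.le, ← hudef, Real.rpow_two, Real.rpow_two]
  have hXs : s ^ (4 / pt) = s ^ 2 / v ^ 2 := by
    rw [h4pt, show (4 - 4 / p : ℝ) = 2 - (2 / p - 1) * 2 from by ring,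
      Real.rpow_sub hs, Real.rpow_mul hs.le, ← hvdef, Real.rpow_two, Real.rpow_two]
  rw [hXc, hXs]
  -- RHS numerator
  have hRn : (1 / 2 : ℝ) ^ (2 * (1 - 2 / p)) * Real.sin (2 * θ) ^ (2 * (1 - 2 / p)) =
      ((s * c) ^ ((2 / p - 1) * (-2) : ℝ)) := by
    rw [Real.sin_two_mul, ← hsdef, ← hcdef,
      ← Real.mul_rpow (by norm_num) (by positivity : (0 : ℝ) ≤ 2 * s * c),
      show (1 / 2 : ℝ) * (2 * s * c) = s * c from by ring]
    norm_num
    ring_nf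
  have hRn2 : ((s * c) ^ ((2 / p - 1) * (-2) : ℝ)) = ((v * u) ^ 2)⁻¹ := by
    rw [Real.rpow_mul (by positivity), Real.mul_rpow hs.le hc.le, ← hvdef, ← hudef,
      show ((-2 : ℝ)) = -(2 : ℝ) from by norm_num, Real.rpow_neg (by positivity),
      Real.rpow_two]
  rw [mul_assoc ((p - 1) / p), hRn, hRn2]
  -- LHS denominator
  have hD : ((-2 * s * u) ^ 2 + (2 * c * v) ^ 2 : ℝ) =
      (2 * (u * v)) ^ 2 * (c ^ 2 / u ^ 2 + s ^ 2 / v ^ 2) := by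
    field_simp
    ring
  rw [hD, Real.mul_rpow (by positivity) (by positivity)]
  have hDD : (((2 * (u * v)) ^ 2 : ℝ)) ^ ((3 : ℝ) / 2) = (2 * (u * v)) ^ 3 := by
    rw [← Real.rpow_natCast (2 * (u * v)) 2, ← Real.rpow_mul (by positivity),
      ← Real.rpow_natCast (2 * (u * v)) 3]
    norm_num
  rw [hDD]
  have hX : (0 : ℝ) < c ^ 2 / u ^ 2 + s ^ 2 / v ^ 2 := by positivity
  have hX32 : (0 : ℝ) < (c ^ 2 / u ^ 2 + s ^ 2 / v ^ 2) ^ ((3 : ℝ) / 2) :=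
    Real.rpow_pos_of_pos hX _
  field_simp
  ring
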